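/- Let (𝔫, ⟨·,·⟩) be a 2-step nilpotent metric Lie algebra whose center z(𝔫) equals the commutator ideal [𝔫, 𝔫], let 𝔳 = z(𝔫)^⊥, and let J be a bi-invariant orthogonal complex structure on 𝔫 (J² = −id, J[x, y] = [Jx, y] for all x, y, and ⟨Jx, Jy⟩ = ⟨x, y⟩ for all x, y; such a J preserves both z(𝔫) and 𝔳). Then the endomorphism T of 𝔫 defined by T|_𝔳 = J|_𝔳 and T|_{z(𝔫)} = 3·J|_{z(𝔫)} is an invertible Killing-Yano tensor on (𝔫, ⟨·,·⟩), and T is not parallel. -/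

import Mathlib

section Defs

variable {g : Type*} [LieRing g] [LieAlgebra ℝ g]

/-- `B` is a (positive definite) inner product on the real Lie algebra `g`,
given as a bilinear form. -/
structure IsInnerProduct (B : g →ₗ[ℝ] g →ₗ[ℝ] ℝ) : Prop where
  symm : ∀ x y : g, B x y = B y x
  posdef : ∀ x : g, x ≠ 0 → 0 < B x x

/-- The Koszul formula characterizing the Levi-Civita connection of the metric Lie
algebra `(g, B)`: `2⟨∇ₓy, z⟩ = ⟨[x,y], z⟩ − ⟨[y,z], x⟩ + ⟨[z,x], y⟩`. -/
def IsLeviCivita (B : g →ₗ[ℝ] g →ₗ[ℝ] ℝ) (D : g → g → g) : Prop :=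
  ∀ x y z : g, 2 * B (D x y) z = B ⁅x, y⁆ z - B ⁅y, z⁆ x + B ⁅z, x⁆ y

/-- A skew-symmetric endomorphism with respect to `B`. -/
def IsSkewSymmetric (B : g →ₗ[ℝ] g →ₗ[ℝ] ℝ) (T : g →ₗ[ℝ] g) : Prop :=
  ∀ x y : g, B (T x) y = - B x (T y)

/-- The conformal Killing-Yano equation for an endomorphism `T` with associated 1-form `θ`:
`⟨(∇ₓT)y, z⟩ + ⟨(∇_yT)x, z⟩ = 2⟨x,y⟩θ(z) − ⟨y,z⟩θ(x) − ⟨x,z⟩θ(y)`,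
where `(∇ₓT)y = ∇ₓ(Ty) − T(∇ₓy)`. -/
def IsCKYWith (B : g →ₗ[ℝ] g →ₗ[ℝ] ℝ) (D : g → g → g) (T : g →ₗ[ℝ] g)
    (θ : g →ₗ[ℝ] ℝ) : Prop :=
  ∀ x y z : g,
    B (D x (T y) - T (D x y)) z + B (D y (T x) - T (D y x)) z =
      2 * B x y * θ z - B y z * θ x - B x z * θ y

/-- A Killing-Yano tensor is a CKY tensor with `θ = 0`. -/
def IsKY (B : g →ₗ[ℝ] g →ₗ[ℝ] ℝ) (D : g → g → g) (T : g →ₗ[ℝ] g) : Prop :=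
  IsCKYWith B D T 0

/-- A parallel tensor: `(∇ₓT)y = 0` for all `x, y`. -/
def IsParallelT (D : g → g → g) (T : g →ₗ[ℝ] g) : Prop :=
  ∀ x y : g, D x (T y) - T (D x y) = 0

/-- The orthogonal complement of a submodule with respect to the bilinear form `B`. -/
def orthComp (B : g →ₗ[ℝ] g →ₗ[ℝ] ℝ) (p : Submodule ℝ g) : Submodule ℝ g where
  carrier := {x : g | ∀ y ∈ p, B x y = 0}
  add_mem' := by
    intro a b ha hb y hy
    simp only [map_add, LinearMap.add_apply, ha y hy, hb y hy, add_zero]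
  zero_mem' := by
    intro y hy
    simp
  smul_mem' := by
    intro c a ha y hy
    simp only [map_smul, LinearMap.smul_apply, ha y hy, smul_eq_mul, mul_zero]

end Defs

/-- On a 2-step nilpotent metric Lie algebra with `z(𝔫) = [𝔫, 𝔫]`, given a
bi-invariant orthogonal complex structure `J` (which preserves `z(𝔫)` and `𝔳 = z(𝔫)^⊥`),
the endomorphism `T` with `T|_𝔳 = J|_𝔳` and `T|_{z(𝔫)} = 3J|_{z(𝔫)}` is an invertible
Killing-Yano tensor which is not parallel. -/
theorem two_step_biinvariant_complex_gives_ky {n : Type*} [LieRing n] [LieAlgebra ℝ n]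
    [FiniteDimensional ℝ n]
    (B : n →ₗ[ℝ] n →ₗ[ℝ] ℝ) (hB : IsInnerProduct B)
    (hnonab : ∃ x y : n, ⁅x, y⁆ ≠ 0)
    (h2step : ∀ x y z : n, ⁅x, ⁅y, z⁆⁆ = 0)
    (hzc : (LieAlgebra.center ℝ n).toSubmodule
      = Submodule.span ℝ {w : n | ∃ x y : n, w = ⁅x, y⁆})
    (D : n → n → n) (hD : IsLeviCivita B D)
    (J : n →ₗ[ℝ] n)
    (hJ2 : ∀ x : n, J (J x) = -x)
    (hJbi : ∀ x y : n, J ⁅x, y⁆ = ⁅J x, y⁆)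
    (hJorth : ∀ x y : n, B (J x) (J y) = B x y)
    (hJz : ∀ z ∈ LieAlgebra.center ℝ n, J z ∈ LieAlgebra.center ℝ n)
    (hJv : ∀ x ∈ orthComp B (LieAlgebra.center ℝ n).toSubmodule,
      J x ∈ orthComp B (LieAlgebra.center ℝ n).toSubmodule)
    (T : n →ₗ[ℝ] n)
    (hTv : ∀ x ∈ orthComp B (LieAlgebra.center ℝ n).toSubmodule, T x = J x)
    (hTz : ∀ z ∈ LieAlgebra.center ℝ n, T z = (3 : ℝ) • J z) :
    IsSkewSymmetric B T ∧ IsKY B D T ∧ Function.Bijective T ∧ ¬ IsParallelT D T := by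
  classical
  set Z : Submodule ℝ n := (LieAlgebra.center ℝ n).toSubmodule with hZdef
  set V : Submodule ℝ n := orthComp B Z with hVdef
  have hBsym := hB.symm
  have hBzero : ∀ x : n, B x x = 0 → x = 0 := by
    intro x hx
    by_contra h
    exact absurd hx (ne_of_gt (hB.posdef x h))
  have hmemZ : ∀ w : n, w ∈ Z ↔ ∀ x : n, ⁅x, w⁆ = 0 := fun w =>
    LieModule.mem_maxTrivSubmodule ℝ n n w
  have hzr : ∀ b x : n, b ∈ Z → ⁅x, b⁆ = 0 := fun b x hb => (hmemZ b).1 hb x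
  have hzl : ∀ b x : n, b ∈ Z → ⁅b, x⁆ = 0 := by
    intro b x hb
    rw [← neg_eq_zero, lie_skew]
    exact hzr b x hb
  have hbr : ∀ x y : n, ⁅x, y⁆ ∈ Z := fun x y => (hmemZ _).2 (fun a => h2step a x y)
  -- J facts
  have hJskew : ∀ x y : n, B (J x) y = - B x (J y) := by
    intro x y
    have h := hJorth x (J y)
    rw [hJ2 y, map_neg] at h
    linarith
  have hJbr : ∀ x y : n, ⁅x, J y⁆ = J ⁅x, y⁆ := by
    intro x y
    calc ⁅x, J y⁆ = -⁅J y, x⁆ := (lie_skew x (J y)).symm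
      _ = -J ⁅y, x⁆ := by rw [hJbi]
      _ = J (-⁅y, x⁆) := (map_neg J _).symm
      _ = J ⁅x, y⁆ := by rw [lie_skew]
  have hJZ : ∀ b : n, b ∈ Z → J b ∈ Z := fun b hb => hJz b hb
  have hJV : ∀ a : n, a ∈ V → J a ∈ V := fun a ha => hJv a ha
  -- orthogonality values
  have hBvz : ∀ p q : n, p ∈ V → q ∈ Z → B p q = 0 := fun p q hp hq => hp q hq
  have hBzv : ∀ p q : n, p ∈ Z → q ∈ V → B p q = 0 := by
    intro p q hp hq
    rw [hBsym]
    exact hq p hp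
  -- orthogonal decomposition
  have hrefl : B.IsRefl := by
    intro x y h
    rw [hBsym]; exact h
  have hrestrict : (LinearMap.BilinForm.restrict B Z).Nondegenerate := by
    constructor <;>
    · rintro ⟨x, hx⟩ h
      exact Subtype.ext (hBzero x (h ⟨x, hx⟩))
  have hcompl : IsCompl Z (LinearMap.BilinForm.orthogonal B Z) :=
    LinearMap.BilinForm.isCompl_orthogonal_of_restrict_nondegenerate hrefl hrestrict
  have hdec : ∀ x : n, ∃ a b : n, a ∈ V ∧ b ∈ Z ∧ x = a + b := by
    intro x
    have hx : x ∈ Z ⊔ LinearMap.BilinForm.orthogonal B Z := by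
      rw [hcompl.sup_eq_top]; trivial
    obtain ⟨b, hb, a, ha, rfl⟩ := Submodule.mem_sup.1 hx
    refine ⟨a, b, ?_, hb, (add_comm b a)⟩
    intro q hq
    rw [hBsym]
    exact ha q hq
  -- value of T on a decomposed vector
  have hT : ∀ a b : n, a ∈ V → b ∈ Z → T (a + b) = J a + (3 : ℝ) • J b := by
    intro a b ha hb
    rw [map_add, hTv a ha, hTz b hb]
  -- brackets of decomposed vectors
  have hbxy : ∀ a b c d : n, b ∈ Z → d ∈ Z → ⁅a + b, c + d⁆ = ⁅a, c⁆ := by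
    intro a b c d hb hd
    rw [add_lie, lie_add, lie_add, hzr d a hd, hzl b c hb, hzl b d hb]
    abel
  -- skew-symmetry of T
  have hTskew : IsSkewSymmetric B T := by
    intro x y
    obtain ⟨a, b, ha, hb, rfl⟩ := hdec x
    obtain ⟨c, d, hc, hd, rfl⟩ := hdec y
    rw [hT a b ha hb, hT c d hc hd]
    have z1 : B (J a) d = 0 := hBvz _ _ (hJV a ha) hd
    have z2 : B (J b) c = 0 := hBzv _ _ (hJZ b hb) hc
    have z3 : B a (J d) = 0 := hBvz _ _ ha (hJZ d hd)
    have z4 : B b (J c) = 0 := hBzv _ _ hb (hJV c hc)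
    have s1 : B (J a) c = - B a (J c) := hJskew a c
    have s2 : B (J b) d = - B b (J d) := hJskew b d
    simp only [map_add, LinearMap.add_apply, map_smul, LinearMap.smul_apply, smul_eq_mul,
      z1, z2, z3, z4, s1, s2]
    ring
  -- the key computation
  have key : ∀ a b c d e f : n, a ∈ V → b ∈ Z → c ∈ V → d ∈ Z → e ∈ V → f ∈ Z →
      2 * B (D (a + b) (T (c + d)) - T (D (a + b) (c + d))) (e + f) =
        2 * B ⁅a, c⁆ (J f) + 2 * B ⁅c, e⁆ (J b) + 2 * B ⁅e, a⁆ (J d) := by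
    intro a b c d e f ha hb hc hd he hf
    have eTy : T (c + d) = J c + (3 : ℝ) • J d := hT c d hc hd
    have eTw : T (e + f) = J e + (3 : ℝ) • J f := hT e f he hf
    have e1 : ⁅a + b, T (c + d)⁆ = J ⁅a, c⁆ := by
      rw [eTy]
      simp only [lie_add, add_lie, lie_smul, hzr (J d) a (hJZ d hd), hzr (J d) b (hJZ d hd),
        hzl b (J c) hb, smul_zero, add_zero, zero_add]
      exact hJbr a c
    have e2 : ⁅T (c + d), e + f⁆ = J ⁅c, e⁆ := by
      rw [eTy]
      simp only [add_lie, lie_add, smul_lie, hzl (J d) e (hJZ d hd), hzl (J d) f (hJZ d hd),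
        hzr f (J c) hf, smul_zero, add_zero, zero_add]
      exact (hJbi c e).symm
    have e3 : ⁅e + f, a + b⁆ = ⁅e, a⁆ := hbxy e f a b hf hb
    have e4 : ⁅a + b, c + d⁆ = ⁅a, c⁆ := hbxy a b c d hb hd
    have e5 : ⁅c + d, T (e + f)⁆ = J ⁅c, e⁆ := by
      rw [eTw]
      simp only [lie_add, add_lie, lie_smul, hzr (J f) c (hJZ f hf), hzr (J f) d (hJZ f hf),
        hzl d (J e) hd, smul_zero, add_zero, zero_add]
      exact hJbr c e
    have e6 : ⁅T (e + f), a + b⁆ = J ⁅e, a⁆ := by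
      rw [eTw]
      simp only [add_lie, lie_add, smul_lie, hzl (J f) a (hJZ f hf), hzl (J f) b (hJZ f hf),
        hzr b (J e) hb, smul_zero, add_zero, zero_add]
      exact (hJbi e a).symm
    have z1 : B (J ⁅a, c⁆) e = 0 := hBzv _ _ (hJZ _ (hbr a c)) he
    have z2 : B (J ⁅c, e⁆) a = 0 := hBzv _ _ (hJZ _ (hbr c e)) ha
    have z3 : B (J ⁅e, a⁆) c = 0 := hBzv _ _ (hJZ _ (hbr e a)) hc
    have z4 : B ⁅e, a⁆ (J c) = 0 := hBzv _ _ (hbr e a) (hJV c hc)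
    have z5 : B ⁅a, c⁆ (J e) = 0 := hBzv _ _ (hbr a c) (hJV e he)
    have s1 : B (J ⁅a, c⁆) f = - B ⁅a, c⁆ (J f) := hJskew _ _
    have s2 : B (J ⁅c, e⁆) b = - B ⁅c, e⁆ (J b) := hJskew _ _
    have s3 : B (J ⁅e, a⁆) d = - B ⁅e, a⁆ (J d) := hJskew _ _
    have step1 : 2 * B (D (a + b) (T (c + d)) - T (D (a + b) (c + d))) (e + f) =
        2 * B (D (a + b) (T (c + d))) (e + f) +
          2 * B (D (a + b) (c + d)) (T (e + f)) := by
      rw [map_sub, LinearMap.sub_apply, hTskew (D (a + b) (c + d)) (e + f)]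
      ring
    rw [step1, hD (a + b) (T (c + d)) (e + f), hD (a + b) (c + d) (T (e + f)),
      e1, e2, e3, e4, e5, e6, eTy, eTw]
    simp only [map_add, LinearMap.add_apply, map_smul, LinearMap.smul_apply, smul_eq_mul,
      z1, z2, z3, z4, z5, s1, s2, s3]
    ring
  -- Killing-Yano
  have hKY : IsKY B D T := by
    intro x y w
    obtain ⟨a, b, ha, hb, rfl⟩ := hdec x
    obtain ⟨c, d, hc, hd, rfl⟩ := hdec y
    obtain ⟨e, f, he, hf, rfl⟩ := hdec w
    have h1 := key a b c d e f ha hb hc hd he hf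
    have h2 := key c d a b e f hc hd ha hb he hf
    have hca : ⁅c, a⁆ = -⁅a, c⁆ := (lie_skew c a).symm
    have hae : ⁅a, e⁆ = -⁅e, a⁆ := (lie_skew a e).symm
    have hec : ⁅e, c⁆ = -⁅c, e⁆ := (lie_skew e c).symm
    rw [hca, hae, hec] at h2
    simp only [map_neg, LinearMap.neg_apply] at h2
    simp only [LinearMap.zero_apply, mul_zero, sub_zero, zero_sub]
    linarith
  refine ⟨hTskew, hKY, ?_, ?_⟩
  · -- bijective
    have hinj : Function.Injective T := by
      refine (injective_iff_map_eq_zero T).2 ?_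
      intro x hx
      obtain ⟨a, b, ha, hb, rfl⟩ := hdec x
      rw [hT a b ha hb] at hx
      have haa : B (J a) (J a) = 0 := by
        have h := congrArg (fun u => B u (J a)) hx
        simp only [map_add, LinearMap.add_apply, map_smul, LinearMap.smul_apply, smul_eq_mul,
          map_zero, LinearMap.zero_apply] at h
        have hz : B (J b) (J a) = 0 := hBzv _ _ (hJZ b hb) (hJV a ha)
        rw [hz] at h
        linarith
      have hbb : B (J b) (J b) = 0 := by
        have h := congrArg (fun u => B u (J b)) hx
        simp only [map_add, LinearMap.add_apply, map_smul, LinearMap.smul_apply, smul_eq_mul,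
          map_zero, LinearMap.zero_apply] at h
        have hz : B (J a) (J b) = 0 := hBvz _ _ (hJV a ha) (hJZ b hb)
        rw [hz] at h
        linarith
      have ha0 : a = 0 := by
        have h2 := hJ2 a
        rw [hBzero _ haa, map_zero] at h2
        exact neg_eq_zero.mp h2.symm
      have hb0 : b = 0 := by
        have h2 := hJ2 b
        rw [hBzero _ hbb, map_zero] at h2
        exact neg_eq_zero.mp h2.symm
      rw [ha0, hb0, add_zero]
    exact ⟨hinj, LinearMap.injective_iff_surjective.1 hinj⟩
  · -- not parallel
    intro hpar
    obtain ⟨x0, y0, hne⟩ := hnonab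
    obtain ⟨a, b, ha, hb, rfl⟩ := hdec x0
    obtain ⟨c, d, hc, hd, rfl⟩ := hdec y0
    have hac : ⁅a, c⁆ ≠ 0 := by
      rw [hbxy a b c d hb hd] at hne
      exact hne
    have hkey := key a 0 c 0 0 (J ⁅a, c⁆) ha (Submodule.zero_mem Z) hc
      (Submodule.zero_mem Z) (Submodule.zero_mem V) (hJZ _ (hbr a c))
    simp only [add_zero, zero_add] at hkey
    rw [hpar a c, hJ2] at hkey
    simp only [map_zero, LinearMap.zero_apply, lie_zero, zero_lie, mul_zero, add_zero,
      map_neg] at hkey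
    exact hac (hBzero _ (by linarith))
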